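/- Let d ≥ 7 be an integer, ε > 0, and Δ ≥ √d · ε. Let Γ ⊆ {−1,1}^(d−1) be any set such that any two distinct elements u ≠ u' of Γ differ in strictly more than (d−1)/4 coordinates. For u ∈ Γ define θ(u) ∈ ℝ^d by θ(u)_1 = Δ and θ(u)_{j+1} = ε·u_j for 1 ≤ j ≤ d−1. Then for all u ≠ u' in Γ, the (undirected) angle ∠(θ(u), θ(u')) = arccos(⟨θ(u), θ(u')⟩/(‖θ(u)‖·‖θ(u')‖)) satisfies √(d−1)·ε/(2Δ) ≤ ∠(θ(u), θ(u')) ≤ π/2. -/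

import Mathlib

open InnerProductGeometry Real
open scoped Classical

/-- Lemma B.3: angle bounds between the packing vectors
`θ(u) = (Δ, ε·u_1, …, ε·u_{d−1})` built from a Varshamov–Gilbert family `Γ`. -/
theorem packing_angle_bounds (d : ℕ) (hd : 7 ≤ d) (ε Δ : ℝ) (hε : 0 < ε)
    (hΔ : Real.sqrt d * ε ≤ Δ)
    (Γ : Set (Fin (d - 1) → ℝ))
    (hΓcoord : ∀ u ∈ Γ, ∀ j, u j = -1 ∨ u j = 1)
    (hΓsep : ∀ u ∈ Γ, ∀ u' ∈ Γ, u ≠ u' →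
      ((d : ℝ) - 1) / 4 < ((Finset.univ.filter fun j => u j ≠ u' j).card : ℝ))
    (θ : (Fin (d - 1) → ℝ) → EuclideanSpace ℝ (Fin d))
    (hθ : ∀ u, θ u = fun i : Fin d =>
      if h : (i : ℕ) = 0 then Δ else ε * u ⟨(i : ℕ) - 1, by omega⟩) :
    ∀ u ∈ Γ, ∀ u' ∈ Γ, u ≠ u' →
      Real.sqrt ((d : ℝ) - 1) * ε / (2 * Δ) ≤ angle (θ u) (θ u') ∧
        angle (θ u) (θ u') ≤ π / 2 := by
  obtain ⟨n, rfl⟩ : ∃ n, d = n + 1 := ⟨d - 1, by omega⟩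
  have hn : 6 ≤ n := by omega
  have hΔpos : 0 < Δ := lt_of_lt_of_le (by positivity) hΔ
  have hΔ1 : Real.sqrt ((n : ℝ) + 1) * ε ≤ Δ := by push_cast at hΔ; exact hΔ
  have hΔ2 : ((n : ℝ) + 1) * ε ^ 2 ≤ Δ ^ 2 := by
    have h0 : 0 ≤ Real.sqrt ((n:ℝ)+1) * ε := by positivity
    have h1 := mul_self_le_mul_self h0 hΔ1
    nlinarith [Real.sq_sqrt (show (0:ℝ) ≤ (n:ℝ)+1 by positivity)]
  -- inner product formula
  have key : ∀ v w : Fin (n+1-1) → ℝ,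
      (inner ℝ (θ v) (θ w) : ℝ) = Δ^2 + ε^2 * ∑ j, v j * w j := by
    intro v w
    simp only [PiLp.inner_apply, hθ v, hθ w]
    simp only [PiLp.inner_apply, RCLike.inner_apply, conj_trivial]
    rw [Fin.sum_univ_succ]
    simp [Fin.val_succ, Finset.mul_sum, pow_two]
    apply Finset.sum_congr rfl; intro j _; ring
  set N2 : ℝ := Δ ^ 2 + ε ^ 2 * n with hN2def
  have hN2pos : 0 < N2 := by positivity
  -- norms
  have hself : ∀ v ∈ Γ, ‖θ v‖ = Real.sqrt N2 := by
    intro v hv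
    have hsum : ∑ j, v j * v j = (n : ℝ) := by
      have h1 : ∀ j ∈ (Finset.univ : Finset (Fin (n+1-1))), v j * v j = 1 := by
        intro j _; rcases hΓcoord v hv j with h | h <;> simp [h]
      rw [Finset.sum_congr rfl h1, Finset.sum_const, nsmul_eq_mul]
      simp
    have hni : (inner ℝ (θ v) (θ v) : ℝ) = N2 := by rw [key v v, hsum]
    have := real_inner_self_eq_norm_mul_norm (θ v)
    rw [hni] at this
    rw [this, Real.sqrt_mul_self (norm_nonneg _)]
  intro u hu u' hu' hne
  set s := (Finset.univ.filter fun j => u j ≠ u' j) with hsdef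
  set H : ℕ := s.card with hHdef
  have hHle : H ≤ n := by
    have := Finset.card_filter_le Finset.univ (fun j => u j ≠ u' j)
    simpa [hHdef, hsdef] using this
  have hHgt : (n : ℝ) / 4 < H := by
    have := hΓsep u hu u' hu' hne
    push_cast at this
    linarith
  -- sum of products
  have hsum : ∑ j, u j * u' j = (n : ℝ) - 2 * H := by
    have hsplit := Finset.sum_filter_add_sum_filter_not Finset.univ
      (fun j => u j ≠ u' j) (fun j => u j * u' j)
    rw [← hsdef] at hsplit
    have hA : ∑ j ∈ s, u j * u' j = -(H : ℝ) := by
      have h1 : ∀ j ∈ s, u j * u' j = -1 := by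
        intro j hj
        rw [hsdef, Finset.mem_filter] at hj
        rcases hΓcoord u hu j with h | h <;> rcases hΓcoord u' hu' j with h' | h' <;>
          simp [h, h'] at hj ⊢
      rw [Finset.sum_congr rfl h1, Finset.sum_const, nsmul_eq_mul]
      ring
    have hc : s.card + (Finset.univ.filter fun j => ¬ u j ≠ u' j).card = n := by
      have := Finset.card_filter_add_card_filter_not
        (s := (Finset.univ : Finset (Fin (n+1-1)))) (p := fun j => u j ≠ u' j)
      simpa [hsdef] using this
    have hB : ∑ j ∈ (Finset.univ.filter fun j => ¬ u j ≠ u' j), u j * u' j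
        = ((n : ℝ) - H) := by
      have h1 : ∀ j ∈ (Finset.univ.filter fun j => ¬ u j ≠ u' j), u j * u' j = 1 := by
        intro j hj
        rw [Finset.mem_filter, not_not] at hj
        rcases hΓcoord u hu j with h | h <;>
          simp [h, ← hj.2] at hj ⊢ <;> simp [h]
      rw [Finset.sum_congr rfl h1, Finset.sum_const, nsmul_eq_mul, mul_one]
      have hcR : ((H + (Finset.univ.filter fun j => ¬ u j ≠ u' j).card : ℕ) : ℝ)
          = (n : ℝ) := by rw [hc]
      push_cast at hcR
      linarith
    rw [← hsplit, hA, hB]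
    ring
  have hinner : (inner ℝ (θ u) (θ u') : ℝ) = Δ ^ 2 + ε ^ 2 * ((n : ℝ) - 2 * H) := by
    rw [key u u', hsum]
  have hnm : ‖θ u‖ * ‖θ u'‖ = N2 := by
    rw [hself u hu, hself u' hu', Real.mul_self_sqrt hN2pos.le]
  set X : ℝ := (Δ ^ 2 + ε ^ 2 * ((n : ℝ) - 2 * H)) / N2 with hXdef
  have hang : angle (θ u) (θ u') = Real.arccos X := by
    rw [InnerProductGeometry.angle, hinner, hnm]
  clear_value X N2 H s
  clear hθ hΓcoord hΓsep key hself hsum hinner hnm hsdef hHdef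
  have hX0 : 0 ≤ X := by
    rw [hXdef]
    apply div_nonneg _ hN2pos.le
    have : (n : ℝ) - 2 * H ≥ -(n : ℝ) := by
      have : (H : ℝ) ≤ n := by exact_mod_cast hHle
      linarith
    nlinarith
  constructor
  · -- lower bound
    set c : ℝ := Real.sqrt ((n : ℝ)) * ε / (2 * Δ) with hcdef
    have hgoal : Real.sqrt ((((n:ℕ)+1 : ℕ) : ℝ) - 1) * ε / (2 * Δ) = c := by
      push_cast; rw [hcdef]; ring_nf
    have hc0 : 0 ≤ c := by positivity
    have hsq : Real.sqrt ((n:ℝ)) ^ 2 = (n : ℝ) := Real.sq_sqrt (by positivity)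
    have hcle : c ≤ 1 := by
      rw [hcdef, div_le_one (by positivity)]
      have h1 : Real.sqrt ((n:ℝ)) ≤ Real.sqrt ((n:ℝ)+1) := by
        apply Real.sqrt_le_sqrt; linarith
      nlinarith [Real.sqrt_nonneg ((n:ℝ)), hε.le]
    have hcπ : c ≤ π := le_trans hcle (by linarith [Real.pi_gt_three])
    have hc2 : c ^ 2 = (n : ℝ) * ε ^ 2 / (4 * Δ ^ 2) := by
      rw [hcdef, div_pow, mul_pow, hsq, mul_pow]; ring_nf
    have hXle : X ≤ 1 - c ^ 2 / 2 := by
      rw [hXdef, div_le_iff₀ hN2pos, hc2, hN2def]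
      have hHn : (n : ℝ) / 4 < (H : ℝ) := hHgt
      have hd2 : (0:ℝ) < Δ ^ 2 := by positivity
      have he2 : (0:ℝ) < ε ^ 2 := by positivity
      have hn0 : (0:ℝ) ≤ (n:ℝ) := Nat.cast_nonneg n
      have h3 : (0:ℝ) ≤ 3 * Δ ^ 2 - (n:ℝ) * ε ^ 2 := by
        have := mul_nonneg hn0 he2.le
        linarith
      have hstep : (n:ℝ) * ε^2 * (Δ^2 + ε^2*n) ≤ 16 * H * Δ^2 * ε^2 := by
        have p1 := mul_pos (sub_pos.mpr hHn) (mul_pos hd2 he2)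
        have p2 := mul_nonneg (mul_nonneg hn0 h3) he2.le
        nlinarith [p1, p2]
      have hterm : (n:ℝ)*ε^2/(4*Δ^2)/2 * (Δ^2+ε^2*(n:ℝ)) ≤ 2*(H:ℝ)*ε^2 := by
        rw [div_div, div_mul_eq_mul_div, div_le_iff₀ (by positivity)]
        linarith [hstep]
      linarith [hterm]
    have hXc : X ≤ Real.cos c := le_trans hXle (Real.one_sub_sq_div_two_le_cos)
    have : Real.arccos (Real.cos c) ≤ Real.arccos X := by
      unfold Real.arccos
      have := Real.monotone_arcsin hXc
      linarith
    rw [Real.arccos_cos hc0 hcπ] at this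
    rw [hang, hgoal]
    exact this
  · rw [hang]
    exact Real.arccos_le_pi_div_two.mpr hX0
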